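/- Let ψ₀ = ∏_{i<j} sin^β(x_i − x_j) and H_CS = −(1/2)∑_i ∂_i² + β(β−1) ∑_{i<j} 1/sin²(x_i − x_j). Then H_CS ψ₀ = E₀ ψ₀ with E₀ = (1/6) β² N(N+1)(N−1). -/

import Mathlib

/-- Partial derivative in the `i`-th coordinate of a function of `N` real variables. -/
noncomputable def pd {N : ℕ} (i : Fin N) (f : (Fin N → ℝ) → ℝ) : (Fin N → ℝ) → ℝ :=
  fun x => deriv (fun t => f (Function.update x i t)) (x i)

/-- The Calogero–Sutherland ground state `ψ₀ = ∏_{i<j} sin^β (x_i - x_j)`. -/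
noncomputable def psi0 (N : ℕ) (β : ℝ) : (Fin N → ℝ) → ℝ :=
  fun x => ∏ p ∈ Finset.univ.filter (fun p : Fin N × Fin N => p.1 < p.2),
    Real.sin (x p.1 - x p.2) ^ β

section Aux

open Finset

/-- the set of ordered triples of pairwise distinct indices -/
noncomputable def trip (N : ℕ) : Finset (Fin N × Fin N × Fin N) :=
  Finset.univ.filter (fun t => t.1 ≠ t.2.1 ∧ t.1 ≠ t.2.2 ∧ t.2.1 ≠ t.2.2)

private lemma pair_split {N : ℕ} (f : Fin N → Fin N → ℝ) :
    ∑ i : Fin N, ∑ j ∈ Finset.univ.erase i, f i j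
      = ∑ p ∈ Finset.univ.filter (fun p : Fin N × Fin N => p.1 < p.2), f p.1 p.2
        + ∑ p ∈ Finset.univ.filter (fun p : Fin N × Fin N => p.1 < p.2), f p.2 p.1 := by
  classical
  have h1 : ∑ p ∈ Finset.univ.filter (fun p : Fin N × Fin N => p.1 ≠ p.2), f p.1 p.2
      = ∑ i : Fin N, ∑ j ∈ Finset.univ.erase i, f i j := by
    rw [Finset.sum_filter, Fintype.sum_prod_type]
    refine Finset.sum_congr rfl fun a _ => ?_
    rw [Finset.sum_ite, Finset.sum_const_zero, add_zero, Finset.filter_ne]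
  have hsplit : Finset.univ.filter (fun p : Fin N × Fin N => p.1 ≠ p.2)
      = Finset.univ.filter (fun p : Fin N × Fin N => p.1 < p.2)
        ∪ Finset.univ.filter (fun p : Fin N × Fin N => p.2 < p.1) := by
    ext p
    simp only [Finset.mem_filter, Finset.mem_union, Finset.mem_univ, true_and]
    exact ⟨fun h => h.lt_or_gt, fun h => h.elim ne_of_lt (fun h' => (ne_of_lt h').symm)⟩
  have hdisj : Disjoint (Finset.univ.filter (fun p : Fin N × Fin N => p.1 < p.2))
      (Finset.univ.filter (fun p : Fin N × Fin N => p.2 < p.1)) := by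
    rw [Finset.disjoint_left]
    intro p hp hq
    simp only [Finset.mem_filter] at hp hq
    exact absurd hq.2 (not_lt_of_gt hp.2)
  have h2 : ∑ p ∈ Finset.univ.filter (fun p : Fin N × Fin N => p.2 < p.1), f p.1 p.2
      = ∑ p ∈ Finset.univ.filter (fun p : Fin N × Fin N => p.1 < p.2), f p.2 p.1 := by
    refine Finset.sum_nbij' Prod.swap Prod.swap ?_ ?_ ?_ ?_ ?_ <;> simp
  rw [← h1, hsplit, Finset.sum_union hdisj, h2]

private lemma triple_split {N : ℕ} (f : Fin N → Fin N → Fin N → ℝ) :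
    ∑ t ∈ trip N, f t.1 t.2.1 t.2.2
      = ∑ i : Fin N, ∑ j ∈ Finset.univ.erase i,
          ∑ k ∈ (Finset.univ.erase i).erase j, f i j k := by
  classical
  rw [trip, Finset.sum_filter, Fintype.sum_prod_type]
  refine Finset.sum_congr rfl fun a _ => ?_
  rw [Fintype.sum_prod_type]
  have hinner : ∀ b : Fin N,
      (∑ c : Fin N, if a ≠ b ∧ a ≠ c ∧ b ≠ c then f a b c else 0)
        = if a ≠ b then ∑ k ∈ (Finset.univ.erase a).erase b, f a b k else 0 := by
    intro b
    by_cases hab : a = b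
    · simp [hab]
    · rw [if_pos hab]
      have hstep : ∀ c : Fin N, (if a ≠ b ∧ a ≠ c ∧ b ≠ c then f a b c else 0)
          = if a ≠ c ∧ b ≠ c then f a b c else 0 := by
        intro c
        by_cases h : a ≠ c ∧ b ≠ c <;> simp [h, hab]
      rw [Finset.sum_congr rfl fun c _ => hstep c, Finset.sum_ite, Finset.sum_const_zero,
        add_zero]
      congr 1
      ext c
      simp only [Finset.mem_filter, Finset.mem_erase, Finset.mem_univ, true_and, and_true]
      exact ⟨fun h => ⟨h.2.symm, h.1.symm⟩, fun h => ⟨h.2.symm, h.1.symm⟩⟩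
  rw [Finset.sum_congr rfl fun b _ => hinner b, Finset.sum_ite, Finset.sum_const_zero,
    add_zero, Finset.filter_ne]

private lemma trip_cycle {N : ℕ} (f : Fin N × Fin N × Fin N → ℝ) :
    ∑ t ∈ trip N, f t = ∑ t ∈ trip N, f (t.2.1, t.2.2, t.1) := by
  classical
  refine Finset.sum_nbij' (fun t => (t.2.2, t.1, t.2.1)) (fun t => (t.2.1, t.2.2, t.1))
    ?_ ?_ ?_ ?_ ?_
  · intro t ht
    simp only [trip, Finset.mem_filter, Finset.mem_univ, true_and] at ht ⊢
    exact ⟨ht.2.1.symm, ht.2.2.symm, ht.1⟩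
  · intro t ht
    simp only [trip, Finset.mem_filter, Finset.mem_univ, true_and] at ht ⊢
    exact ⟨ht.2.2, ht.1.symm, ht.2.1.symm⟩
  · intro t _; rfl
  · intro t _; rfl
  · intro t _; rfl

private lemma sum_erase_one {N : ℕ} :
    ∑ i : Fin N, ∑ j ∈ Finset.univ.erase i, (1 : ℝ) = (N : ℝ) ^ 2 - N := by
  simp only [Finset.sum_const, nsmul_eq_mul, mul_one,
    Finset.card_erase_of_mem (Finset.mem_univ _), Finset.card_univ, Fintype.card_fin]
  cases N with
  | zero => simp
  | succ n =>
      simp only [Nat.succ_sub_one]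
      push_cast
      ring

private lemma sum_erase_erase_one {N : ℕ} :
    ∑ i : Fin N, ∑ j ∈ Finset.univ.erase i, ∑ k ∈ (Finset.univ.erase i).erase j, (1 : ℝ)
      = (N : ℝ) ^ 3 - 3 * (N : ℝ) ^ 2 + 2 * N := by
  have h1 : ∀ i : Fin N, ∀ j ∈ Finset.univ.erase i,
      ∑ k ∈ (Finset.univ.erase i).erase j, (1 : ℝ) = ((N - 2 : ℕ) : ℝ) := by
    intro i j hj
    rw [Finset.sum_const, Finset.card_erase_of_mem hj,
      Finset.card_erase_of_mem (Finset.mem_univ i), Finset.card_univ, Fintype.card_fin,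
      nsmul_eq_mul, mul_one]
    congr 1 <;> omega
  rw [Finset.sum_congr rfl fun i _ => Finset.sum_congr rfl (h1 i)]
  simp only [Finset.sum_const, nsmul_eq_mul,
    Finset.card_erase_of_mem (Finset.mem_univ _), Finset.card_univ, Fintype.card_fin]
  match N with
  | 0 => simp
  | 1 => norm_num
  | (n + 2) =>
      have e1 : (n + 2) - 1 = n + 1 := by omega
      have e2 : (n + 2) - 2 = n := by omega
      rw [e1, e2]
      push_cast
      ring

private lemma cot_ident {a b : ℝ} (ha : Real.sin a ≠ 0) (hb : Real.sin b ≠ 0)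
    (hab : Real.sin (a + b) ≠ 0) :
    (Real.cos a / Real.sin a) * (Real.cos (a + b) / Real.sin (a + b))
      + (Real.cos b / Real.sin b) * (Real.cos (a + b) / Real.sin (a + b))
      - (Real.cos a / Real.sin a) * (Real.cos b / Real.sin b) = -1 := by
  field_simp
  rw [Real.sin_add, Real.cos_add]
  ring

private lemma cot_triple {N : ℕ} {x : Fin N → ℝ}
    (hs : ∀ i j : Fin N, i ≠ j → Real.sin (x i - x j) ≠ 0)
    {i j k : Fin N} (hij : i ≠ j) (hik : i ≠ k) (hjk : j ≠ k) :
    (Real.cos (x i - x j) / Real.sin (x i - x j))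
        * (Real.cos (x i - x k) / Real.sin (x i - x k))
      + (Real.cos (x j - x k) / Real.sin (x j - x k))
        * (Real.cos (x j - x i) / Real.sin (x j - x i))
      + (Real.cos (x k - x i) / Real.sin (x k - x i))
        * (Real.cos (x k - x j) / Real.sin (x k - x j)) = -1 := by
  have e1 : x j - x i = -(x i - x j) := by ring
  have e2 : x k - x i = -(x i - x k) := by ring
  have e3 : x k - x j = -(x j - x k) := by ring
  have e4 : x i - x k = (x i - x j) + (x j - x k) := by ring
  rw [e1, e2, e3, Real.cos_neg, Real.cos_neg, Real.cos_neg, Real.sin_neg, Real.sin_neg,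
    Real.sin_neg, e4]
  have h := cot_ident (hs i j hij) (hs j k hjk) (by rw [← e4]; exact hs i k hik)
  rw [div_neg, div_neg, div_neg]
  linear_combination h

private lemma comb {N : ℕ} (x : Fin N → ℝ)
    (hs : ∀ i j : Fin N, i ≠ j → Real.sin (x i - x j) ≠ 0) :
    ∑ i : Fin N,
        (∑ j ∈ Finset.univ.erase i, Real.cos (x i - x j) / Real.sin (x i - x j)) ^ 2
      = ∑ i : Fin N, ∑ j ∈ Finset.univ.erase i,
          (Real.cos (x i - x j) / Real.sin (x i - x j)) ^ 2
        - ((N : ℝ) ^ 3 - 3 * (N : ℝ) ^ 2 + 2 * N) / 3 := by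
  classical
  set c : Fin N → Fin N → ℝ := fun i j => Real.cos (x i - x j) / Real.sin (x i - x j) with hc
  have hsq : ∀ i : Fin N,
      (∑ j ∈ Finset.univ.erase i, c i j) ^ 2
        = ∑ j ∈ Finset.univ.erase i, (c i j) ^ 2
          + ∑ j ∈ Finset.univ.erase i, ∑ k ∈ (Finset.univ.erase i).erase j, c i j * c i k := by
    intro i
    rw [sq, Finset.sum_mul_sum, ← Finset.sum_add_distrib]
    refine Finset.sum_congr rfl fun j hj => ?_
    rw [← Finset.add_sum_erase (Finset.univ.erase i) (fun k => c i j * c i k) hj, sq]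
  have hcard : ∑ t ∈ trip N, (1 : ℝ) = (N : ℝ) ^ 3 - 3 * (N : ℝ) ^ 2 + 2 * N := by
    rw [triple_split (fun _ _ _ => (1 : ℝ))]
    exact sum_erase_erase_one
  have hT : ∑ i : Fin N, ∑ j ∈ Finset.univ.erase i, ∑ k ∈ (Finset.univ.erase i).erase j,
      c i j * c i k = -(((N : ℝ) ^ 3 - 3 * (N : ℝ) ^ 2 + 2 * N) / 3) := by
    have t1 := triple_split (N := N) (fun i j k => c i j * c i k)
    have t2 := trip_cycle (N := N) (fun t => c t.1 t.2.1 * c t.1 t.2.2)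
    have t3 := trip_cycle (N := N) (fun t => c t.2.1 t.2.2 * c t.2.1 t.1)
    have hsum : ∑ t ∈ trip N,
        (c t.1 t.2.1 * c t.1 t.2.2 + c t.2.1 t.2.2 * c t.2.1 t.1
          + c t.2.2 t.1 * c t.2.2 t.2.1)
        = ∑ t ∈ trip N, (-1 : ℝ) := by
      refine Finset.sum_congr rfl fun t ht => ?_
      simp only [trip, Finset.mem_filter, Finset.mem_univ, true_and] at ht
      exact cot_triple hs ht.1 ht.2.1 ht.2.2
    rw [Finset.sum_add_distrib, Finset.sum_add_distrib, ← t2] at hsum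
    rw [← t2] at t3
    rw [← t3] at hsum
    have hneg : ∑ t ∈ trip N, (-1 : ℝ) = -((N : ℝ) ^ 3 - 3 * (N : ℝ) ^ 2 + 2 * N) := by
      rw [← hcard]
      simp
    rw [hneg] at hsum
    rw [← t1]
    linarith
  rw [Finset.sum_congr rfl fun i _ => hsq i, Finset.sum_add_distrib, hT]
  ring

private lemma sum_eps {N : ℕ} (i : Fin N) (g : Fin N → Fin N → ℝ)
    (hg : ∀ a b, g b a = - g a b) :
    ∑ p ∈ Finset.univ.filter (fun p : Fin N × Fin N => p.1 < p.2),
      (((if p.1 = i then (1 : ℝ) else 0) - if p.2 = i then (1 : ℝ) else 0) * g p.1 p.2)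
      = ∑ j ∈ Finset.univ.erase i, g i j := by
  classical
  have h := pair_split (N := N) (fun a b => if a = i then g a b else 0)
  have h1 : ∀ p ∈ Finset.univ.filter (fun p : Fin N × Fin N => p.1 < p.2),
      (((if p.1 = i then (1 : ℝ) else 0) - if p.2 = i then (1 : ℝ) else 0) * g p.1 p.2)
        = (if p.1 = i then g p.1 p.2 else 0) + (if p.2 = i then g p.2 p.1 else 0) := by
    intro p hp
    have hne : p.1 ≠ p.2 := ne_of_lt (Finset.mem_filter.1 hp).2
    by_cases ha : p.1 = i <;> by_cases hb : p.2 = i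
    · exact absurd (ha.trans hb.symm) hne
    · simp [ha, hb]
    · subst hb
      simp [ha, hg p.1 p.2]
    · simp [ha, hb]
  rw [Finset.sum_congr rfl h1, Finset.sum_add_distrib, ← h]
  have h2 : ∀ a : Fin N, (∑ b ∈ Finset.univ.erase a, if a = i then g a b else 0)
      = if a = i then (∑ b ∈ Finset.univ.erase a, g a b) else 0 := by
    intro a
    by_cases ha : a = i <;> simp [ha]
  rw [Finset.sum_congr rfl fun a _ => h2 a,
    Finset.sum_ite_eq' Finset.univ i (fun a => ∑ b ∈ Finset.univ.erase a, g a b)]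
  simp

private lemma aux_pow {β : ℝ} {u : ℝ → ℝ} {u' t : ℝ} (h : HasDerivAt u u' t)
    (hne : Real.sin (u t) ≠ 0) :
    HasDerivAt (fun s => Real.sin (u s) ^ β)
      (β * Real.sin (u t) ^ (β - 1) * (Real.cos (u t) * u')) t := by
  have h1 : HasDerivAt (fun s => Real.sin (u s)) (Real.cos (u t) * u') t :=
    (Real.hasDerivAt_sin (u t)).comp t h
  have h2 := (Real.hasDerivAt_rpow_const (x := Real.sin (u t)) (p := β) (Or.inl hne)).comp t h1
  exact h2

private lemma psi0_deriv {N : ℕ} (β : ℝ) (y : Fin N → ℝ)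
    (hy : ∀ i j : Fin N, i ≠ j → Real.sin (y i - y j) ≠ 0) (i : Fin N) :
    HasDerivAt (fun t => psi0 N β (Function.update y i t))
      (β * (∑ j ∈ Finset.univ.erase i, Real.cos (y i - y j) / Real.sin (y i - y j))
        * psi0 N β y) (y i) := by
  classical
  have key : ∀ p ∈ Finset.univ.filter (fun p : Fin N × Fin N => p.1 < p.2), HasDerivAt
      (fun t => Real.sin (Function.update y i t p.1 - Function.update y i t p.2) ^ β)
      (β * Real.sin (y p.1 - y p.2) ^ (β - 1) * (Real.cos (y p.1 - y p.2) *
        ((if p.1 = i then (1 : ℝ) else 0) - if p.2 = i then (1 : ℝ) else 0))) (y i) := by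
    intro p hp
    have hne : p.1 ≠ p.2 := ne_of_lt (Finset.mem_filter.1 hp).2
    have hsne : Real.sin (y p.1 - y p.2) ≠ 0 := hy _ _ hne
    have hinner : HasDerivAt (fun t => Function.update y i t p.1 - Function.update y i t p.2)
        ((if p.1 = i then (1 : ℝ) else 0) - if p.2 = i then (1 : ℝ) else 0) (y i) := by
      rcases eq_or_ne p.1 i with h1 | h1 <;> rcases eq_or_ne p.2 i with h2 | h2
      · exact absurd (h1.trans h2.symm) hne
      · have hf : ∀ t : ℝ, Function.update y i t p.1 - Function.update y i t p.2
            = t - y p.2 := by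
          intro t; rw [h1, Function.update_self, Function.update_of_ne h2]
        rw [if_pos h1, if_neg h2]
        simp only [hf]
        simpa using (hasDerivAt_id (y i)).sub_const (y p.2)
      · have hf : ∀ t : ℝ, Function.update y i t p.1 - Function.update y i t p.2
            = y p.1 - t := by
          intro t; rw [h2, Function.update_self, Function.update_of_ne h1]
        rw [if_neg h1, if_pos h2]
        simp only [hf]
        simpa using (hasDerivAt_const (y i) (y p.1)).fun_sub (hasDerivAt_id' (x := y i))
      · have hf : ∀ t : ℝ, Function.update y i t p.1 - Function.update y i t p.2
            = y p.1 - y p.2 := by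
          intro t; rw [Function.update_of_ne h1, Function.update_of_ne h2]
        rw [if_neg h1, if_neg h2]
        simp only [hf]
        simpa using hasDerivAt_const (y i) (y p.1 - y p.2)
    have := aux_pow (β := β) hinner (by
      have : Function.update y i (y i) = y := Function.update_eq_self i y
      rw [this]; exact hsne)
    simp only [Function.update_eq_self] at this
    exact this
  have hprod := HasDerivAt.fun_finsetProd key
  simp only [Function.update_eq_self, smul_eq_mul] at hprod
  have hval : ∑ p ∈ Finset.univ.filter (fun p : Fin N × Fin N => p.1 < p.2),
      (∏ q ∈ (Finset.univ.filter (fun p : Fin N × Fin N => p.1 < p.2)).erase p,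
        Real.sin (y q.1 - y q.2) ^ β)
      * (β * Real.sin (y p.1 - y p.2) ^ (β - 1) * (Real.cos (y p.1 - y p.2) *
        ((if p.1 = i then (1 : ℝ) else 0) - if p.2 = i then (1 : ℝ) else 0)))
      = β * (∑ j ∈ Finset.univ.erase i, Real.cos (y i - y j) / Real.sin (y i - y j))
        * psi0 N β y := by
    have step1 : ∀ p ∈ Finset.univ.filter (fun p : Fin N × Fin N => p.1 < p.2),
        (∏ q ∈ (Finset.univ.filter (fun p : Fin N × Fin N => p.1 < p.2)).erase p,
          Real.sin (y q.1 - y q.2) ^ β)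
        * (β * Real.sin (y p.1 - y p.2) ^ (β - 1) * (Real.cos (y p.1 - y p.2) *
          ((if p.1 = i then (1 : ℝ) else 0) - if p.2 = i then (1 : ℝ) else 0)))
        = (((if p.1 = i then (1 : ℝ) else 0) - if p.2 = i then (1 : ℝ) else 0) *
            (Real.cos (y p.1 - y p.2) / Real.sin (y p.1 - y p.2))) * (β * psi0 N β y) := by
      intro p hp
      have hsne : Real.sin (y p.1 - y p.2) ≠ 0 :=
        hy _ _ (ne_of_lt (Finset.mem_filter.1 hp).2)
      rw [Real.rpow_sub_one hsne]
      rw [show psi0 N β y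
          = (∏ q ∈ (Finset.univ.filter (fun p : Fin N × Fin N => p.1 < p.2)).erase p,
              Real.sin (y q.1 - y q.2) ^ β) * Real.sin (y p.1 - y p.2) ^ β from
        (Finset.prod_erase_mul _ _ hp).symm]
      field_simp
    have hanti : ∀ a b : Fin N, Real.cos (y b - y a) / Real.sin (y b - y a)
        = -(Real.cos (y a - y b) / Real.sin (y a - y b)) := fun a b => by
      rw [show y b - y a = -(y a - y b) by ring, Real.cos_neg, Real.sin_neg, div_neg]
    rw [Finset.sum_congr rfl step1, ← Finset.sum_mul,
      sum_eps i (fun a b => Real.cos (y a - y b) / Real.sin (y a - y b))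
        (fun a b => hanti a b)]
    ring
  rw [hval] at hprod
  exact hprod

private lemma cot_hasDeriv (a t : ℝ) (h : Real.sin (t - a) ≠ 0) :
    HasDerivAt (fun s => Real.cos (s - a) / Real.sin (s - a))
      (-(1 / Real.sin (t - a) ^ 2)) t := by
  have h1 : HasDerivAt (fun s : ℝ => s - a) 1 t := (hasDerivAt_id t).sub_const a
  have hc : HasDerivAt (fun s => Real.cos (s - a)) (-Real.sin (t - a) * 1) t :=
    by have := (Real.hasDerivAt_cos (t - a)).comp t h1; exact this
  have hsn : HasDerivAt (fun s => Real.sin (s - a)) (Real.cos (t - a) * 1) t :=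
    by have := (Real.hasDerivAt_sin (t - a)).comp t h1; exact this
  have hd := hc.fun_div hsn h
  refine hd.congr_deriv ?_
  have hpy := Real.sin_sq_add_cos_sq (t - a)
  field_simp
  nlinarith [hpy]

private lemma pd_sq {N : ℕ} (β : ℝ) (x : Fin N → ℝ)
    (hs : ∀ i j : Fin N, i ≠ j → Real.sin (x i - x j) ≠ 0) (i : Fin N) :
    pd i (pd i (psi0 N β)) x
      = (β * (∑ j ∈ Finset.univ.erase i, -(1 / Real.sin (x i - x j) ^ 2))
          + β ^ 2 * (∑ j ∈ Finset.univ.erase i,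
              Real.cos (x i - x j) / Real.sin (x i - x j)) ^ 2)
        * psi0 N β x := by
  classical
  have hev : ∀ᶠ t in nhds (x i), ∀ j k : Fin N, j ≠ k →
      Real.sin (Function.update x i t j - Function.update x i t k) ≠ 0 := by
    rw [Filter.eventually_all]
    intro j
    rw [Filter.eventually_all]
    intro k
    rcases eq_or_ne j k with rfl | hjk
    · exact Filter.Eventually.of_forall fun t h => absurd rfl h
    · have hcont : ContinuousAt
          (fun t => Real.sin (Function.update x i t j - Function.update x i t k)) (x i) := by
        apply Continuous.continuousAt
        apply Real.continuous_sin.comp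
        have hj : (fun t : ℝ => Function.update x i t j) = fun t => if j = i then t else x j := by
          funext t; simp [Function.update_apply]
        have hk : (fun t : ℝ => Function.update x i t k) = fun t => if k = i then t else x k := by
          funext t; simp [Function.update_apply]
        have cj : Continuous (fun t : ℝ => Function.update x i t j) := by
          rw [hj]; by_cases h : j = i <;> simp [h] <;> fun_prop
        have ck : Continuous (fun t : ℝ => Function.update x i t k) := by
          rw [hk]; by_cases h : k = i <;> simp [h] <;> fun_prop
        exact cj.sub ck
      have hne0 : Real.sin (Function.update x i (x i) j - Function.update x i (x i) k) ≠ 0 := by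
        rw [Function.update_eq_self]
        exact hs j k hjk
      exact (hcont.eventually_ne hne0).mono fun t ht _ => ht
  have hev2 : (fun t => pd i (psi0 N β) (Function.update x i t))
      =ᶠ[nhds (x i)] (fun t => β * (∑ j ∈ Finset.univ.erase i,
          Real.cos (t - x j) / Real.sin (t - x j)) * psi0 N β (Function.update x i t)) := by
    refine hev.mono fun t ht => ?_
    have hd := psi0_deriv β (Function.update x i t) ht i
    simp only [Function.update_idem, Function.update_self] at hd
    have hsum : (∑ j ∈ Finset.univ.erase i,
        Real.cos (t - Function.update x i t j) / Real.sin (t - Function.update x i t j))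
        = ∑ j ∈ Finset.univ.erase i, Real.cos (t - x j) / Real.sin (t - x j) :=
      Finset.sum_congr rfl fun j hj => by
        rw [Function.update_of_ne (Finset.ne_of_mem_erase hj)]
    rw [hsum] at hd
    show deriv (fun s => psi0 N β (Function.update (Function.update x i t) i s))
        (Function.update x i t i) = _
    simp only [Function.update_idem, Function.update_self]
    exact hd.deriv
  have hL : HasDerivAt (fun t => ∑ j ∈ Finset.univ.erase i,
      Real.cos (t - x j) / Real.sin (t - x j))
      (∑ j ∈ Finset.univ.erase i, -(1 / Real.sin (x i - x j) ^ 2)) (x i) :=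
    HasDerivAt.fun_sum fun j hj =>
      cot_hasDeriv (x j) (x i) (hs i j (Finset.ne_of_mem_erase hj).symm)
  have hg : HasDerivAt (fun t => psi0 N β (Function.update x i t))
      (β * (∑ j ∈ Finset.univ.erase i, Real.cos (x i - x j) / Real.sin (x i - x j))
        * psi0 N β x) (x i) := psi0_deriv β x hs i
  have hmul := (hL.const_mul β).fun_mul hg
  have hstep : pd i (pd i (psi0 N β)) x
      = deriv (fun t => β * (∑ j ∈ Finset.univ.erase i,
          Real.cos (t - x j) / Real.sin (t - x j)) * psi0 N β (Function.update x i t)) (x i) :=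
    hev2.deriv_eq
  rw [hstep, hmul.deriv]
  have hgx : psi0 N β (Function.update x i (x i)) = psi0 N β x := by
    rw [Function.update_eq_self]
  rw [hgx]
  ring

end Aux

theorem stmt_12 (N : ℕ) (β : ℝ) (x : Fin N → ℝ)
    (hx : ∀ i j : Fin N, i ≠ j → ∀ m : ℤ, x i - x j ≠ m * Real.pi) :
    -(1 / 2) * (∑ i : Fin N, pd i (pd i (psi0 N β)) x)
      + β * (β - 1) * (∑ p ∈ Finset.univ.filter (fun p : Fin N × Fin N => p.1 < p.2),
          (1 / Real.sin (x p.1 - x p.2) ^ 2)) * psi0 N β x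
      = (1 / 6) * β ^ 2 * (N : ℝ) * ((N : ℝ) + 1) * ((N : ℝ) - 1) * psi0 N β x := by
  classical
  have hs : ∀ i j : Fin N, i ≠ j → Real.sin (x i - x j) ≠ 0 := by
    intro i j hij h0
    rcases Real.sin_eq_zero_iff.1 h0 with ⟨n, hn⟩
    exact hx i j hij n hn.symm
  have h2S : ∑ i : Fin N, ∑ j ∈ Finset.univ.erase i, (1 / Real.sin (x i - x j) ^ 2)
      = 2 * ∑ p ∈ Finset.univ.filter (fun p : Fin N × Fin N => p.1 < p.2),
          (1 / Real.sin (x p.1 - x p.2) ^ 2) := by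
    rw [pair_split (fun a b => 1 / Real.sin (x a - x b) ^ 2)]
    have : ∑ p ∈ Finset.univ.filter (fun p : Fin N × Fin N => p.1 < p.2),
        (1 / Real.sin (x p.2 - x p.1) ^ 2)
        = ∑ p ∈ Finset.univ.filter (fun p : Fin N × Fin N => p.1 < p.2),
          (1 / Real.sin (x p.1 - x p.2) ^ 2) :=
      Finset.sum_congr rfl fun p _ => by
        rw [show x p.2 - x p.1 = -(x p.1 - x p.2) by ring, Real.sin_neg, neg_sq]
    rw [this]
    ring
  have hc2 : ∑ i : Fin N, ∑ j ∈ Finset.univ.erase i,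
      (Real.cos (x i - x j) / Real.sin (x i - x j)) ^ 2
      = ∑ i : Fin N, ∑ j ∈ Finset.univ.erase i,
          (1 / Real.sin (x i - x j) ^ 2 - 1) := by
    refine Finset.sum_congr rfl fun i _ => Finset.sum_congr rfl fun j hj => ?_
    have hsne := hs i j (Finset.ne_of_mem_erase hj).symm
    have hpy := Real.sin_sq_add_cos_sq (x i - x j)
    field_simp
    nlinarith [hpy]
  have hQ : ∑ i : Fin N,
      (∑ j ∈ Finset.univ.erase i, Real.cos (x i - x j) / Real.sin (x i - x j)) ^ 2
      = 2 * (∑ p ∈ Finset.univ.filter (fun p : Fin N × Fin N => p.1 < p.2),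
          (1 / Real.sin (x p.1 - x p.2) ^ 2))
        - ((N : ℝ) ^ 2 - N) - ((N : ℝ) ^ 3 - 3 * (N : ℝ) ^ 2 + 2 * N) / 3 := by
    rw [comb x hs, hc2]
    rw [show (∑ i : Fin N, ∑ j ∈ Finset.univ.erase i,
        (1 / Real.sin (x i - x j) ^ 2 - 1))
        = (∑ i : Fin N, ∑ j ∈ Finset.univ.erase i, (1 / Real.sin (x i - x j) ^ 2))
          - ∑ i : Fin N, ∑ j ∈ Finset.univ.erase i, (1 : ℝ) by
      rw [← Finset.sum_sub_distrib]
      exact Finset.sum_congr rfl fun i _ => by rw [← Finset.sum_sub_distrib]]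
    rw [h2S, sum_erase_one]
  rw [Finset.sum_congr rfl fun i (_ : i ∈ Finset.univ) => pd_sq β x hs i, ← Finset.sum_mul]
  rw [Finset.sum_add_distrib]
  have hneg : ∑ i : Fin N, β * (∑ j ∈ Finset.univ.erase i, -(1 / Real.sin (x i - x j) ^ 2))
      = -β * ∑ i : Fin N, ∑ j ∈ Finset.univ.erase i, (1 / Real.sin (x i - x j) ^ 2) := by
    rw [← Finset.mul_sum]
    rw [show (∑ i : Fin N, ∑ j ∈ Finset.univ.erase i, -(1 / Real.sin (x i - x j) ^ 2))
        = -∑ i : Fin N, ∑ j ∈ Finset.univ.erase i, (1 / Real.sin (x i - x j) ^ 2) by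
      rw [← Finset.sum_neg_distrib]
      exact Finset.sum_congr rfl fun i _ => by rw [← Finset.sum_neg_distrib]]
    ring
  rw [hneg, h2S]
  rw [show (∑ i : Fin N, β ^ 2 * (∑ j ∈ Finset.univ.erase i,
      Real.cos (x i - x j) / Real.sin (x i - x j)) ^ 2)
      = β ^ 2 * ∑ i : Fin N, (∑ j ∈ Finset.univ.erase i,
          Real.cos (x i - x j) / Real.sin (x i - x j)) ^ 2 from (Finset.mul_sum _ _ _).symm]
  rw [hQ]
  ring
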